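/- Suppose the learning algorithm A is OAROS with rate ε1, and suppose there is a monotonically decreasing function ε2 : ℕ → ℝ such that for every n ≥ 1, E_{T̃ ~ D^{n+1}} [ L_T(A_n(T)) − L_{T̃}(A_{n+1}(T̃)) ] ≤ ε2(n), where T denotes the tuple of the first n entries of T̃. Then for every n ≥ 1, E_{T~D^n} E_{x'~D} [ (1/n) Σ_{i=1}^n ℓ(A_n(T^{i←x'}), T_i) − L_D(A_{n+1}(T ⊕ x')) ] ≤ 2·ε1(n) + ε2(n). -/

import Mathlib

open MeasureTheory

noncomputable section

/-- The i.i.d. sample measure of size `n` drawn from `D`. -/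
def iid {Z : Type*} [MeasurableSpace Z] (D : Measure Z) (n : ℕ) :
    Measure (Fin n → Z) :=
  Measure.pi fun _ => D

/-- The learning algorithm is symmetric: invariant under permutations of the
entries of its input tuple. -/
def IsSymmetricAlg {Z H : Type*} (A : ∀ k : ℕ, (Fin k → Z) → H) : Prop :=
  ∀ (k : ℕ) (σ : Equiv.Perm (Fin k)) (S : Fin k → Z), A k (S ∘ σ) = A k S

/-- For each `k`, the map `(S, z) ↦ ℓ(A k S, z)` is measurable and bounded. -/
def MeasBddAlg {Z H : Type*} [MeasurableSpace Z] (ℓ : H → Z → ℝ)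
    (A : ∀ k : ℕ, (Fin k → Z) → H) : Prop :=
  ∀ k : ℕ, Measurable (fun p : (Fin k → Z) × Z => ℓ (A k p.1) p.2) ∧
    ∃ C : ℝ, ∀ (S : Fin k → Z) (z : Z), ℓ (A k S) z ≤ C

/-- On-Average-Replace-One-Stability with rate `ε1`. -/
def OAROS {Z H : Type*} [MeasurableSpace Z] (ℓ : H → Z → ℝ)
    (A : ∀ k : ℕ, (Fin k → Z) → H) (ε1 : ℕ → ℝ) : Prop :=
  Antitone ε1 ∧
  ∀ (D : Measure Z), IsProbabilityMeasure D → ∀ n : ℕ, 1 ≤ n →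
    ∫ T, ∫ x',
        (n : ℝ)⁻¹ * ∑ i : Fin n,
          |ℓ (A n T) (T i) - ℓ (A n (Function.update T i x')) (T i)|
      ∂D ∂(iid D n) ≤ ε1 n

section Aux

variable {Z : Type*} [MeasurableSpace Z] (D : Measure Z) [IsProbabilityMeasure D]

instance iid_isProb (n : ℕ) : IsProbabilityMeasure (iid D n) := by
  unfold iid; infer_instance

lemma integrable_of_bdd {α : Type*} [MeasurableSpace α] {μ : Measure α} [IsFiniteMeasure μ]
    {f : α → ℝ} (hf : AEStronglyMeasurable f μ) {C : ℝ} (hb : ∀ a, |f a| ≤ C) :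
    Integrable f μ :=
  ⟨hf, HasFiniteIntegral.of_bounded (Filter.Eventually.of_forall fun a => by
    simpa [Real.norm_eq_abs] using hb a)⟩

lemma mp_snoc (n : ℕ) :
    MeasurePreserving (fun p : (Fin n → Z) × Z => Fin.snoc p.1 p.2)
      ((iid D n).prod D) (iid D (n+1)) := by
  have h1 := (measurePreserving_piFinSuccAbove (fun _ : Fin (n+1) => D) (Fin.last n)).symm
  have h2 : MeasurePreserving Prod.swap ((iid D n).prod D) (D.prod (iid D n)) :=
    Measure.measurePreserving_swap
  have h3 := h1.comp h2
  have heq : (fun p : (Fin n → Z) × Z => Fin.snoc p.1 p.2)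
      = (⇑(MeasurableEquiv.piFinSuccAbove (fun _ : Fin (n+1) => Z) (Fin.last n)).symm
          ∘ Prod.swap) := by
    funext p
    simp [MeasurableEquiv.piFinSuccAbove_symm_apply, Fin.snocEquiv, Fin.insertNthEquiv]
  rw [heq]
  exact h3

lemma mp_update (m : ℕ) (j : Fin (m+1)) :
    MeasurePreserving (fun q : (Fin (m+1) → Z) × Z => (Function.update q.1 j q.2, q.1 j))
      ((iid D (m+1)).prod D) ((iid D (m+1)).prod D) := by
  set e := MeasurableEquiv.piFinSuccAbove (fun _ : Fin (m+1) => Z) j with he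
  set ρ : Measure (Fin m → Z) := Measure.pi fun _ => D with hρ
  have h1 : MeasurePreserving (Prod.map ⇑e id) ((iid D (m+1)).prod D) ((D.prod ρ).prod D) :=
    (measurePreserving_piFinSuccAbove (fun _ : Fin (m+1) => D) j).prod (MeasurePreserving.id D)
  have h2 := measurePreserving_prodAssoc D ρ D
  have h3 : MeasurePreserving Prod.swap (D.prod (ρ.prod D)) ((ρ.prod D).prod D) :=
    Measure.measurePreserving_swap
  have h4 : MeasurePreserving (Prod.map Prod.swap id) ((ρ.prod D).prod D) ((D.prod ρ).prod D) :=
    (Measure.measurePreserving_swap).prod (MeasurePreserving.id D)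
  have h5 : MeasurePreserving (Prod.map ⇑e.symm id) ((D.prod ρ).prod D) ((iid D (m+1)).prod D) :=
    ((measurePreserving_piFinSuccAbove (fun _ : Fin (m+1) => D) j).symm).prod
      (MeasurePreserving.id D)
  have h := h5.comp (h4.comp (h3.comp (h2.comp h1)))
  have heq : (fun q : (Fin (m+1) → Z) × Z => (Function.update q.1 j q.2, q.1 j))
      = (Prod.map ⇑e.symm id ∘ (Prod.map Prod.swap id ∘ (Prod.swap ∘
          (⇑MeasurableEquiv.prodAssoc ∘ Prod.map ⇑e id)))) := by
    funext q
    simp [he, MeasurableEquiv.piFinSuccAbove_symm_apply, MeasurableEquiv.piFinSuccAbove_apply,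
      MeasurableEquiv.prodAssoc, Fin.insertNthEquiv, Fin.insertNth_removeNth]
  rw [heq]
  exact h

lemma mp_integral {α β : Type*} [MeasurableSpace α] [MeasurableSpace β]
    {μ : Measure α} {ν : Measure β} {φ : α → β}
    (hφ : MeasurePreserving φ μ ν) {f : β → ℝ} (hf : AEStronglyMeasurable f ν) :
    ∫ b, f b ∂ν = ∫ a, f (φ a) ∂μ := by
  rw [← hφ.map_eq] at hf ⊢
  exact integral_map hφ.measurable.aemeasurable hf

lemma measurable_update2 {k : ℕ} (i : Fin k) :
    Measurable (fun p : (Fin k → Z) × Z => Function.update p.1 i p.2) := by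
  refine measurable_pi_iff.2 fun l => ?_
  rcases eq_or_ne l i with rfl | h
  · simp only [Function.update_self]; exact measurable_snd
  · simp only [Function.update_of_ne h]
    exact (measurable_pi_apply l).comp measurable_fst

lemma measurable_init {k : ℕ} :
    Measurable (fun T' : Fin (k+1) → Z => Fin.init T') :=
  measurable_pi_lambda _ fun i => measurable_pi_apply _

end Aux

/-- OAROS stability plus ERM convergence gives the auxiliary
bound `2·ε1(n) + ε2(n)`. -/
theorem stmt_7 {Z H : Type*} [MeasurableSpace Z] (ℓ : H → Z → ℝ)
    (A : ∀ k : ℕ, (Fin k → Z) → H) (ε1 ε2 : ℕ → ℝ)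
    (hℓ : ∀ (h : H) (z : Z), 0 ≤ ℓ h z)
    (hsym : IsSymmetricAlg A) (hmb : MeasBddAlg ℓ A)
    (hst : OAROS ℓ A ε1)
    (D : Measure Z) [IsProbabilityMeasure D]
    (hε2 : Antitone ε2)
    (herm : ∀ n : ℕ, 1 ≤ n →
      ∫ T',
          ((n : ℝ)⁻¹ * ∑ i : Fin n, ℓ (A n (Fin.init T')) (Fin.init T' i) -
            ((n + 1 : ℕ) : ℝ)⁻¹ * ∑ i : Fin (n + 1), ℓ (A (n + 1) T') (T' i))
        ∂(iid D (n + 1)) ≤ ε2 n) :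
    ∀ n : ℕ, 1 ≤ n →
      ∫ T, ∫ x',
          ((n : ℝ)⁻¹ * ∑ i : Fin n, ℓ (A n (Function.update T i x')) (T i) -
            ∫ y, ℓ (A (n + 1) (Fin.snoc T x')) y ∂D)
        ∂D ∂(iid D n) ≤ 2 * ε1 n + ε2 n := by
  intro n hn
  obtain ⟨mbn, Cn, hCn⟩ := hmb n
  obtain ⟨mbm, Cm, hCm⟩ := hmb (n+1)
  have msnoc : Measurable (fun p : (Fin n → Z) × Z => (Fin.snoc p.1 p.2 : Fin (n+1) → Z)) :=
    (mp_snoc D n).measurable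
  -- measurability of elementary pieces
  have m1 : ∀ i : Fin n, Measurable
      (fun p : (Fin n → Z) × Z => ℓ (A n (Function.update p.1 i p.2)) (p.1 i)) := fun i =>
    mbn.comp ((measurable_update2 i).prodMk ((measurable_pi_apply i).comp measurable_fst))
  have m2 : ∀ i : Fin n, Measurable
      (fun p : (Fin n → Z) × Z => ℓ (A n p.1) (p.1 i)) := fun i =>
    mbn.comp (measurable_fst.prodMk ((measurable_pi_apply i).comp measurable_fst))
  have m3 : ∀ j : Fin (n+1), Measurable
      (fun p : (Fin n → Z) × Z => ℓ (A (n+1) (Fin.snoc p.1 p.2)) ((Fin.snoc p.1 p.2 : Fin (n+1) → Z) j)) :=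
    fun j => mbm.comp (msnoc.prodMk ((measurable_pi_apply j).comp msnoc))
  have mc1 : ∀ j : Fin (n+1), Measurable
      (fun q : (Fin (n+1) → Z) × Z => ℓ (A (n+1) q.1) (q.1 j)) := fun j =>
    mbm.comp (measurable_fst.prodMk ((measurable_pi_apply j).comp measurable_fst))
  have mc2 : ∀ j : Fin (n+1), Measurable
      (fun q : (Fin (n+1) → Z) × Z => ℓ (A (n+1) (Function.update q.1 j q.2)) (q.1 j)) :=
    fun j => mbm.comp ((measurable_update2 j).prodMk
      ((measurable_pi_apply j).comp measurable_fst))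
  -- pointwise bounds
  have bℓn : ∀ (S : Fin n → Z) (z : Z), |ℓ (A n S) z| ≤ Cn := fun S z => by
    rw [abs_of_nonneg (hℓ _ _)]; exact hCn S z
  have bℓm : ∀ (S : Fin (n+1) → Z) (z : Z), |ℓ (A (n+1) S) z| ≤ Cm := fun S z => by
    rw [abs_of_nonneg (hℓ _ _)]; exact hCm S z
  have babs : ∀ (a b : ℝ), 0 ≤ a → a ≤ Cn → 0 ≤ b → b ≤ Cn → |a - b| ≤ Cn := by
    intro a b h1 h2 h3 h4
    rw [abs_sub_le_iff]; constructor <;> linarith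
  have babsm : ∀ (a b : ℝ), 0 ≤ a → a ≤ Cm → 0 ≤ b → b ≤ Cm → |a - b| ≤ Cm := by
    intro a b h1 h2 h3 h4
    rw [abs_sub_le_iff]; constructor <;> linarith
  -- integrable building blocks
  have intsum : ∀ {α : Type _} [MeasurableSpace α] (μ : Measure α) [IsProbabilityMeasure μ]
      {k : ℕ} (c : ℝ) (f : Fin k → α → ℝ) (hf : ∀ i, Measurable (f i))
      (C : ℝ) (hb : ∀ i a, |f i a| ≤ C),
      Integrable (fun a => c * ∑ i : Fin k, f i a) μ := by
    intro α _ μ _ k c f hf C hb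
    exact (integrable_finset_sum Finset.univ fun i _ =>
      integrable_of_bdd (hf i).aestronglyMeasurable (hb i)).const_mul c
  have int1 : Integrable (fun p : (Fin n → Z) × Z =>
      (n : ℝ)⁻¹ * ∑ i : Fin n, ℓ (A n (Function.update p.1 i p.2)) (p.1 i)) ((iid D n).prod D) :=
    intsum ((iid D n).prod D) _ _ m1 Cn (fun i p => bℓn _ _)
  have int2 : Integrable (fun p : (Fin n → Z) × Z =>
      (n : ℝ)⁻¹ * ∑ i : Fin n, ℓ (A n p.1) (p.1 i)) ((iid D n).prod D) :=
    intsum ((iid D n).prod D) _ _ m2 Cn (fun i p => bℓn _ _)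
  have int3 : Integrable (fun p : (Fin n → Z) × Z =>
      ((n + 1 : ℕ) : ℝ)⁻¹ * ∑ j : Fin (n+1),
        ℓ (A (n+1) (Fin.snoc p.1 p.2)) ((Fin.snoc p.1 p.2 : Fin (n+1) → Z) j)) ((iid D n).prod D) :=
    intsum ((iid D n).prod D) _ _ m3 Cm (fun j p => bℓm _ _)
  have intW : Integrable (fun p : (Fin n → Z) × Z =>
      (n : ℝ)⁻¹ * ∑ i : Fin n,
        |ℓ (A n p.1) (p.1 i) - ℓ (A n (Function.update p.1 i p.2)) (p.1 i)|) ((iid D n).prod D) :=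
    intsum ((iid D n).prod D) _ _ (fun i => ((m2 i).sub (m1 i)).abs) Cn (fun i p => by
      rw [abs_abs]; exact babs _ _ (hℓ _ _) (hCn _ _) (hℓ _ _) (hCn _ _))
  -- F4 piece
  have sG : StronglyMeasurable (fun T' : Fin (n+1) → Z => ∫ y, ℓ (A (n+1) T') y ∂D) :=
    mbm.stronglyMeasurable.integral_prod_right'
  have b4 : ∀ T' : Fin (n+1) → Z, |∫ y, ℓ (A (n+1) T') y ∂D| ≤ Cm := by
    intro T'
    have h := norm_integral_le_of_norm_le_const (μ := D)
      (f := fun y => ℓ (A (n+1) T') y) (C := Cm)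
      (Filter.Eventually.of_forall fun y => by
        rw [Real.norm_eq_abs]; exact bℓm _ _)
    simpa [Real.norm_eq_abs, measure_univ] using h
  have int4 : Integrable (fun p : (Fin n → Z) × Z =>
      ∫ y, ℓ (A (n+1) (Fin.snoc p.1 p.2)) y ∂D) ((iid D n).prod D) :=
    integrable_of_bdd (sG.comp_measurable msnoc).aestronglyMeasurable (fun p => b4 _)
  -- ((iid D (n+1)).prod D)-side integrable blocks
  have intc1 : ∀ j : Fin (n+1), Integrable
      (fun q : (Fin (n+1) → Z) × Z => ℓ (A (n+1) q.1) (q.1 j)) ((iid D (n+1)).prod D) := fun j =>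
    integrable_of_bdd (mc1 j).aestronglyMeasurable (fun q => bℓm _ _)
  have intc2 : ∀ j : Fin (n+1), Integrable
      (fun q : (Fin (n+1) → Z) × Z => ℓ (A (n+1) (Function.update q.1 j q.2)) (q.1 j)) ((iid D (n+1)).prod D) :=
    fun j => integrable_of_bdd (mc2 j).aestronglyMeasurable (fun q => bℓm _ _)
  have intg : Integrable (fun q : (Fin (n+1) → Z) × Z => ℓ (A (n+1) q.1) q.2) ((iid D (n+1)).prod D) :=
    integrable_of_bdd mbm.aestronglyMeasurable (fun q => bℓm _ _)
  have inth3Q : Integrable (fun q : (Fin (n+1) → Z) × Z =>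
      ((n + 1 : ℕ) : ℝ)⁻¹ * ∑ j : Fin (n+1), ℓ (A (n+1) q.1) (q.1 j)) ((iid D (n+1)).prod D) :=
    intsum ((iid D (n+1)).prod D) _ _ mc1 Cm (fun j q => bℓm _ _)
  have inth3ν : Integrable (fun T' : Fin (n+1) → Z =>
      ((n + 1 : ℕ) : ℝ)⁻¹ * ∑ j : Fin (n+1), ℓ (A (n+1) T') (T' j)) (iid D (n+1)) :=
    intsum (iid D (n+1)) _ _ (fun j => mbm.comp (measurable_id.prodMk (measurable_pi_apply j)))
      Cm (fun j T' => bℓm _ _)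
  have intWQ : Integrable (fun q : (Fin (n+1) → Z) × Z =>
      ((n + 1 : ℕ) : ℝ)⁻¹ * ∑ j : Fin (n+1),
        |ℓ (A (n+1) q.1) (q.1 j) - ℓ (A (n+1) (Function.update q.1 j q.2)) (q.1 j)|) ((iid D (n+1)).prod D) :=
    intsum ((iid D (n+1)).prod D) _ _ (fun j => ((mc1 j).sub (mc2 j)).abs) Cm (fun j q => by
      rw [abs_abs]; exact babsm _ _ (hℓ _ _) (hCm _ _) (hℓ _ _) (hCm _ _))
  -- STEP 1
  have key1 : ∫ p, ((n : ℝ)⁻¹ * ∑ i : Fin n,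
      |ℓ (A n p.1) (p.1 i) - ℓ (A n (Function.update p.1 i p.2)) (p.1 i)|) ∂((iid D n).prod D) ≤ ε1 n := by
    have h := hst.2 D inferInstance n hn
    calc ∫ p, ((n : ℝ)⁻¹ * ∑ i : Fin n,
        |ℓ (A n p.1) (p.1 i) - ℓ (A n (Function.update p.1 i p.2)) (p.1 i)|) ∂((iid D n).prod D)
        = ∫ T, ∫ x', ((n : ℝ)⁻¹ * ∑ i : Fin n,
            |ℓ (A n T) (T i) - ℓ (A n (Function.update T i x')) (T i)|) ∂D ∂(iid D n) :=
          (integral_integral (f := fun T x' => (n : ℝ)⁻¹ * ∑ i : Fin n,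
            |ℓ (A n T) (T i) - ℓ (A n (Function.update T i x')) (T i)|) intW).symm
      _ ≤ ε1 n := h
  have S1 : (∫ p, ((n : ℝ)⁻¹ * ∑ i : Fin n,
        ℓ (A n (Function.update p.1 i p.2)) (p.1 i)) ∂((iid D n).prod D))
      - ∫ p, ((n : ℝ)⁻¹ * ∑ i : Fin n, ℓ (A n p.1) (p.1 i)) ∂((iid D n).prod D) ≤ ε1 n := by
    have hle : ∀ p : (Fin n → Z) × Z,
        ((n : ℝ)⁻¹ * ∑ i : Fin n, ℓ (A n (Function.update p.1 i p.2)) (p.1 i))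
          - (n : ℝ)⁻¹ * ∑ i : Fin n, ℓ (A n p.1) (p.1 i)
        ≤ (n : ℝ)⁻¹ * ∑ i : Fin n,
            |ℓ (A n p.1) (p.1 i) - ℓ (A n (Function.update p.1 i p.2)) (p.1 i)| := by
      intro p
      rw [← mul_sub, ← Finset.sum_sub_distrib]
      refine mul_le_mul_of_nonneg_left (Finset.sum_le_sum fun i _ => ?_)
        (inv_nonneg.2 (Nat.cast_nonneg n))
      exact (le_abs_self _).trans (le_of_eq (abs_sub_comm _ _))
    calc (∫ p, ((n : ℝ)⁻¹ * ∑ i : Fin n,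
          ℓ (A n (Function.update p.1 i p.2)) (p.1 i)) ∂((iid D n).prod D))
        - ∫ p, ((n : ℝ)⁻¹ * ∑ i : Fin n, ℓ (A n p.1) (p.1 i)) ∂((iid D n).prod D)
        = ∫ p, (((n : ℝ)⁻¹ * ∑ i : Fin n, ℓ (A n (Function.update p.1 i p.2)) (p.1 i))
            - (n : ℝ)⁻¹ * ∑ i : Fin n, ℓ (A n p.1) (p.1 i)) ∂((iid D n).prod D) :=
          (integral_sub int1 int2).symm
      _ ≤ ∫ p, ((n : ℝ)⁻¹ * ∑ i : Fin n,
            |ℓ (A n p.1) (p.1 i) - ℓ (A n (Function.update p.1 i p.2)) (p.1 i)|) ∂((iid D n).prod D) :=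
          integral_mono (int1.sub int2) intW hle
      _ ≤ ε1 n := key1
  -- STEP 2
  have hΦm : AEStronglyMeasurable (fun T' : Fin (n+1) → Z =>
      ((n : ℝ)⁻¹ * ∑ i : Fin n, ℓ (A n (Fin.init T')) (Fin.init T' i) -
        ((n + 1 : ℕ) : ℝ)⁻¹ * ∑ i : Fin (n + 1), ℓ (A (n + 1) T') (T' i))) (iid D (n+1)) := by
    refine Measurable.aestronglyMeasurable (Measurable.sub ?_ ?_)
    · exact measurable_const.mul (Finset.measurable_sum _ fun i _ =>
        mbn.comp (measurable_init.prodMk (measurable_pi_apply (Fin.castSucc i))))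
    · exact measurable_const.mul (Finset.measurable_sum _ fun i _ =>
        mbm.comp (measurable_id.prodMk (measurable_pi_apply i)))
  have e2 : ∫ T',
      ((n : ℝ)⁻¹ * ∑ i : Fin n, ℓ (A n (Fin.init T')) (Fin.init T' i) -
        ((n + 1 : ℕ) : ℝ)⁻¹ * ∑ i : Fin (n + 1), ℓ (A (n + 1) T') (T' i)) ∂(iid D (n+1))
      = ∫ p, (((n : ℝ)⁻¹ * ∑ i : Fin n, ℓ (A n p.1) (p.1 i))
          - ((n + 1 : ℕ) : ℝ)⁻¹ * ∑ j : Fin (n+1),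
              ℓ (A (n+1) (Fin.snoc p.1 p.2)) ((Fin.snoc p.1 p.2 : Fin (n+1) → Z) j)) ∂((iid D n).prod D) := by
    rw [mp_integral (mp_snoc D n) hΦm]
    refine integral_congr_ae (Filter.Eventually.of_forall fun p => ?_)
    simp [Fin.init_snoc]
  have S2 : (∫ p, ((n : ℝ)⁻¹ * ∑ i : Fin n, ℓ (A n p.1) (p.1 i)) ∂((iid D n).prod D))
      - ∫ p, (((n + 1 : ℕ) : ℝ)⁻¹ * ∑ j : Fin (n+1),
          ℓ (A (n+1) (Fin.snoc p.1 p.2)) ((Fin.snoc p.1 p.2 : Fin (n+1) → Z) j)) ∂((iid D n).prod D) ≤ ε2 n := by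
    calc (∫ p, ((n : ℝ)⁻¹ * ∑ i : Fin n, ℓ (A n p.1) (p.1 i)) ∂((iid D n).prod D))
        - ∫ p, (((n + 1 : ℕ) : ℝ)⁻¹ * ∑ j : Fin (n+1),
            ℓ (A (n+1) (Fin.snoc p.1 p.2)) ((Fin.snoc p.1 p.2 : Fin (n+1) → Z) j)) ∂((iid D n).prod D)
        = ∫ p, (((n : ℝ)⁻¹ * ∑ i : Fin n, ℓ (A n p.1) (p.1 i))
            - ((n + 1 : ℕ) : ℝ)⁻¹ * ∑ j : Fin (n+1),
                ℓ (A (n+1) (Fin.snoc p.1 p.2)) ((Fin.snoc p.1 p.2 : Fin (n+1) → Z) j)) ∂((iid D n).prod D) :=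
          (integral_sub int2 int3).symm
      _ = ∫ T', ((n : ℝ)⁻¹ * ∑ i : Fin n, ℓ (A n (Fin.init T')) (Fin.init T' i) -
            ((n + 1 : ℕ) : ℝ)⁻¹ * ∑ i : Fin (n + 1), ℓ (A (n + 1) T') (T' i)) ∂(iid D (n+1)) := e2.symm
      _ ≤ ε2 n := herm n hn
  -- STEP 3
  have e3 : ∫ p, (((n + 1 : ℕ) : ℝ)⁻¹ * ∑ j : Fin (n+1),
      ℓ (A (n+1) (Fin.snoc p.1 p.2)) ((Fin.snoc p.1 p.2 : Fin (n+1) → Z) j)) ∂((iid D n).prod D)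
      = ∫ T', (((n + 1 : ℕ) : ℝ)⁻¹ * ∑ j : Fin (n+1), ℓ (A (n+1) T') (T' j)) ∂(iid D (n+1)) :=
    (mp_integral (mp_snoc D n) inth3ν.1).symm
  have e3b : ∫ T', (((n + 1 : ℕ) : ℝ)⁻¹ * ∑ j : Fin (n+1), ℓ (A (n+1) T') (T' j)) ∂(iid D (n+1))
      = ∫ q, (((n + 1 : ℕ) : ℝ)⁻¹ * ∑ j : Fin (n+1), ℓ (A (n+1) q.1) (q.1 j)) ∂((iid D (n+1)).prod D) := by
    calc ∫ T', (((n + 1 : ℕ) : ℝ)⁻¹ * ∑ j : Fin (n+1), ℓ (A (n+1) T') (T' j)) ∂(iid D (n+1))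
        = ∫ T', ∫ _y, (((n + 1 : ℕ) : ℝ)⁻¹ * ∑ j : Fin (n+1),
            ℓ (A (n+1) T') (T' j)) ∂D ∂(iid D (n+1)) := by
          simp [integral_const, measure_univ]
      _ = ∫ q, (((n + 1 : ℕ) : ℝ)⁻¹ * ∑ j : Fin (n+1), ℓ (A (n+1) q.1) (q.1 j)) ∂((iid D (n+1)).prod D) :=
          integral_integral (f := fun (T' : Fin (n+1) → Z) (_ : Z) =>
            ((n + 1 : ℕ) : ℝ)⁻¹ * ∑ j : Fin (n+1), ℓ (A (n+1) T') (T' j)) inth3Q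
  have e4 : ∫ p, (∫ y, ℓ (A (n+1) (Fin.snoc p.1 p.2)) y ∂D) ∂((iid D n).prod D)
      = ∫ T', (∫ y, ℓ (A (n+1) T') y ∂D) ∂(iid D (n+1)) :=
    (mp_integral (mp_snoc D n) (sG.aestronglyMeasurable)).symm
  have e4b : ∫ T', (∫ y, ℓ (A (n+1) T') y ∂D) ∂(iid D (n+1))
      = ∫ q, ℓ (A (n+1) q.1) q.2 ∂((iid D (n+1)).prod D) :=
        integral_integral (f := fun (T' : Fin (n+1) → Z) (y : Z) => ℓ (A (n+1) T') y) intg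
  have e4c : ∀ j : Fin (n+1), ∫ q, ℓ (A (n+1) q.1) q.2 ∂((iid D (n+1)).prod D)
      = ∫ q, ℓ (A (n+1) (Function.update q.1 j q.2)) (q.1 j) ∂((iid D (n+1)).prod D) := fun j =>
    mp_integral (mp_update D n j) intg.1
  have hg_avg : ∫ q, ℓ (A (n+1) q.1) q.2 ∂((iid D (n+1)).prod D)
      = ((n + 1 : ℕ) : ℝ)⁻¹ * ∑ j : Fin (n+1),
          ∫ q, ℓ (A (n+1) (Function.update q.1 j q.2)) (q.1 j) ∂((iid D (n+1)).prod D) := by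
    have hsum : ∑ j : Fin (n+1), ∫ q, ℓ (A (n+1) (Function.update q.1 j q.2)) (q.1 j) ∂((iid D (n+1)).prod D)
        = ((n + 1 : ℕ) : ℝ) * ∫ q, ℓ (A (n+1) q.1) q.2 ∂((iid D (n+1)).prod D) := by
      rw [Finset.sum_congr rfl fun j _ => (e4c j).symm]
      simp [Finset.sum_const, Finset.card_univ, mul_comm, nsmul_eq_mul]
    rw [hsum, ← mul_assoc, inv_mul_cancel₀ (by positivity), one_mul]
  have key3 : ∫ q, (((n + 1 : ℕ) : ℝ)⁻¹ * ∑ j : Fin (n+1),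
      |ℓ (A (n+1) q.1) (q.1 j) - ℓ (A (n+1) (Function.update q.1 j q.2)) (q.1 j)|) ∂((iid D (n+1)).prod D)
      ≤ ε1 (n+1) := by
    have h := hst.2 D inferInstance (n+1) (Nat.le_add_left 1 n)
    calc ∫ q, (((n + 1 : ℕ) : ℝ)⁻¹ * ∑ j : Fin (n+1),
        |ℓ (A (n+1) q.1) (q.1 j) - ℓ (A (n+1) (Function.update q.1 j q.2)) (q.1 j)|) ∂((iid D (n+1)).prod D)
        = ∫ T, ∫ x', (((n + 1 : ℕ) : ℝ)⁻¹ * ∑ j : Fin (n+1),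
            |ℓ (A (n+1) T) (T j) - ℓ (A (n+1) (Function.update T j x')) (T j)|)
            ∂D ∂(iid D (n+1)) := (integral_integral (f := fun T x' =>
              (((n + 1 : ℕ) : ℝ)⁻¹ * ∑ j : Fin (n+1),
                |ℓ (A (n+1) T) (T j) - ℓ (A (n+1) (Function.update T j x')) (T j)|)) intWQ).symm
      _ ≤ ε1 (n+1) := h
  have S3 : (∫ p, (((n + 1 : ℕ) : ℝ)⁻¹ * ∑ j : Fin (n+1),
        ℓ (A (n+1) (Fin.snoc p.1 p.2)) ((Fin.snoc p.1 p.2 : Fin (n+1) → Z) j)) ∂((iid D n).prod D))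
      - ∫ p, (∫ y, ℓ (A (n+1) (Fin.snoc p.1 p.2)) y ∂D) ∂((iid D n).prod D) ≤ ε1 n := by
    have hle : ∀ q : (Fin (n+1) → Z) × Z,
        ((n + 1 : ℕ) : ℝ)⁻¹ * ∑ j : Fin (n+1),
          (ℓ (A (n+1) q.1) (q.1 j) - ℓ (A (n+1) (Function.update q.1 j q.2)) (q.1 j))
        ≤ ((n + 1 : ℕ) : ℝ)⁻¹ * ∑ j : Fin (n+1),
          |ℓ (A (n+1) q.1) (q.1 j) - ℓ (A (n+1) (Function.update q.1 j q.2)) (q.1 j)| := by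
      intro q
      refine mul_le_mul_of_nonneg_left (Finset.sum_le_sum fun j _ => le_abs_self _)
        (inv_nonneg.2 (Nat.cast_nonneg _))
    calc (∫ p, (((n + 1 : ℕ) : ℝ)⁻¹ * ∑ j : Fin (n+1),
          ℓ (A (n+1) (Fin.snoc p.1 p.2)) ((Fin.snoc p.1 p.2 : Fin (n+1) → Z) j)) ∂((iid D n).prod D))
        - ∫ p, (∫ y, ℓ (A (n+1) (Fin.snoc p.1 p.2)) y ∂D) ∂((iid D n).prod D)
        = (∫ q, (((n + 1 : ℕ) : ℝ)⁻¹ * ∑ j : Fin (n+1), ℓ (A (n+1) q.1) (q.1 j)) ∂((iid D (n+1)).prod D))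
            - ∫ q, ℓ (A (n+1) q.1) q.2 ∂((iid D (n+1)).prod D) := by rw [e3, e3b, e4, e4b]
      _ = (((n + 1 : ℕ) : ℝ)⁻¹ * ∑ j : Fin (n+1), ∫ q, ℓ (A (n+1) q.1) (q.1 j) ∂((iid D (n+1)).prod D))
            - ((n + 1 : ℕ) : ℝ)⁻¹ * ∑ j : Fin (n+1),
                ∫ q, ℓ (A (n+1) (Function.update q.1 j q.2)) (q.1 j) ∂((iid D (n+1)).prod D) := by
          rw [hg_avg, integral_const_mul, integral_finset_sum _ (fun j _ => intc1 j)]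
      _ = ((n + 1 : ℕ) : ℝ)⁻¹ * ∑ j : Fin (n+1),
            ∫ q, (ℓ (A (n+1) q.1) (q.1 j)
              - ℓ (A (n+1) (Function.update q.1 j q.2)) (q.1 j)) ∂((iid D (n+1)).prod D) := by
          rw [← mul_sub, ← Finset.sum_sub_distrib]
          congr 1
          exact Finset.sum_congr rfl fun j _ => (integral_sub (intc1 j) (intc2 j)).symm
      _ = ∫ q, (((n + 1 : ℕ) : ℝ)⁻¹ * ∑ j : Fin (n+1),
            (ℓ (A (n+1) q.1) (q.1 j)
              - ℓ (A (n+1) (Function.update q.1 j q.2)) (q.1 j))) ∂((iid D (n+1)).prod D) := by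
          rw [integral_const_mul, integral_finset_sum
            (f := fun (j : Fin (n+1)) (q : (Fin (n+1) → Z) × Z) =>
              ℓ (A (n+1) q.1) (q.1 j) - ℓ (A (n+1) (Function.update q.1 j q.2)) (q.1 j))
            Finset.univ (fun j _ => (intc1 j).sub (intc2 j))]
      _ ≤ ∫ q, (((n + 1 : ℕ) : ℝ)⁻¹ * ∑ j : Fin (n+1),
            |ℓ (A (n+1) q.1) (q.1 j)
              - ℓ (A (n+1) (Function.update q.1 j q.2)) (q.1 j)|) ∂((iid D (n+1)).prod D) :=
          integral_mono ((integrable_finset_sum Finset.univ fun j _ =>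
            (intc1 j).sub (intc2 j)).const_mul _) intWQ hle
      _ ≤ ε1 (n+1) := key3
      _ ≤ ε1 n := hst.1 (Nat.le_succ n)
  -- ASSEMBLY
  calc ∫ T, ∫ x',
        ((n : ℝ)⁻¹ * ∑ i : Fin n, ℓ (A n (Function.update T i x')) (T i) -
          ∫ y, ℓ (A (n + 1) (Fin.snoc T x')) y ∂D) ∂D ∂(iid D n)
      = ∫ p, (((n : ℝ)⁻¹ * ∑ i : Fin n, ℓ (A n (Function.update p.1 i p.2)) (p.1 i))
          - ∫ y, ℓ (A (n+1) (Fin.snoc p.1 p.2)) y ∂D) ∂((iid D n).prod D) :=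
        integral_integral (f := fun T x' =>
          ((n : ℝ)⁻¹ * ∑ i : Fin n, ℓ (A n (Function.update T i x')) (T i) -
            ∫ y, ℓ (A (n + 1) (Fin.snoc T x')) y ∂D)) (int1.sub int4)
    _ = (∫ p, ((n : ℝ)⁻¹ * ∑ i : Fin n, ℓ (A n (Function.update p.1 i p.2)) (p.1 i)) ∂((iid D n).prod D))
        - ∫ p, (∫ y, ℓ (A (n+1) (Fin.snoc p.1 p.2)) y ∂D) ∂((iid D n).prod D) := integral_sub int1 int4
    _ ≤ 2 * ε1 n + ε2 n := by linarith [S1, S2, S3]
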